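/- arXiv:2309.14484 — 4 statements merged into one kernel-verified Lean document; each statement's English description precedes it below -/
import Mathlib

section
/- Fix 0 < p₁ < τ < p₀ < 1 and a constant C > 0. For each n, let N_n ≤ C·n and let m_n be a sequence of positive integers with m_n / log n → ∞. For each n let H₁,…,H_{N_n} be independent random variables, each distributed either Binom(m_n, p₀) or Binom(m_n, p₁) (according to an arbitrary ground-truth labeling), and classify H_j as having parameter p₁ if and only if H_j ≤ m_n τ. Then the probability that any of the N_n variables is misclassified tends to 0 as n → ∞. -/
open MeasureTheory ProbabilityTheory Filter


lemma binom_tail_bound {Ω : Type*} [MeasurableSpace Ω] (μ : Measure Ω) [IsProbabilityMeasure μ]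
    (X : Ω → ℕ) (hX : Measurable X) (m : ℕ) (p : ℝ) (hp0 : 0 < p) (hp1 : p < 1)
    (hlaw : ∀ k, μ {ω | X ω = k}
      = ENNReal.ofReal ((m.choose k : ℝ) * p ^ k * (1 - p) ^ (m - k)))
    (P : ℕ → Prop) [DecidablePred P] (t a : ℝ)
    (hP : ∀ k : ℕ, P k → 0 ≤ t * ((k : ℝ) - a)) :
    μ {ω | P (X ω)} ≤
      ENNReal.ofReal (Real.exp (-(t * a)) * (1 - p + p * Real.exp t) ^ m) := by
  have hq : (0:ℝ) < 1 - p := by linarith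
  have hpmf : ∀ k, (0:ℝ) ≤ (m.choose k : ℝ) * p ^ k * (1 - p) ^ (m - k) := fun k => by
    positivity
  -- total mass on range (m+1) is 1
  have hsum1 : ∑ k ∈ Finset.range (m+1), (m.choose k : ℝ) * p ^ k * (1 - p) ^ (m - k) = 1 := by
    have h := add_pow p (1 - p) m
    simp only [add_sub_cancel, one_pow] at h
    rw [Finset.sum_congr rfl (fun k _ => by ring :
      ∀ k ∈ Finset.range (m+1), (m.choose k : ℝ) * p ^ k * (1 - p) ^ (m - k)
        = p ^ k * (1 - p) ^ (m - k) * (m.choose k : ℝ)), ← h]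
  -- measure of {X ≤ m} is 1
  have hle : μ {ω | X ω ≤ m} = 1 := by
    have hset : {ω | X ω ≤ m} = ⋃ k ∈ Finset.range (m+1), {ω | X ω = k} := by
      ext ω; simp [Nat.lt_succ_iff]
    have hdisj : (Finset.range (m+1) : Set ℕ).PairwiseDisjoint
        (fun k => {ω | X ω = k}) := by
      intro i _ j _ hij
      simp only [Function.onFun, Set.disjoint_left]
      intro ω h1 h2
      exact hij (h1.symm.trans h2)
    have := measure_biUnion_finset (μ := μ) hdisj
      (fun k _ => hX (measurableSet_singleton k))
    rw [hset, this, Finset.sum_congr rfl (fun k _ => hlaw k),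
      ← ENNReal.ofReal_sum_of_nonneg (fun k _ => hpmf k), hsum1, ENNReal.ofReal_one]
  have hgt : μ {ω | m < X ω} = 0 := by
    have : {ω | m < X ω} = {ω | X ω ≤ m}ᶜ := by ext ω; simp [not_le]
    have hms : MeasurableSet {ω | X ω ≤ m} := hX measurableSet_Iic
    rw [this, measure_compl hms (measure_ne_top μ _), hle, measure_univ, tsub_self]
  -- split
  have hsplit : {ω | P (X ω)} ⊆
      (⋃ k ∈ (Finset.range (m+1)).filter P, {ω | X ω = k}) ∪ {ω | m < X ω} := by
    intro ω hω
    by_cases h : X ω ≤ m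
    · left
      have hk : X ω ∈ (Finset.range (m+1)).filter P :=
        Finset.mem_filter.2 ⟨Finset.mem_range.2 (Nat.lt_succ_of_le h), hω⟩
      exact Set.mem_biUnion hk rfl
    · right; exact not_le.1 h
  calc μ {ω | P (X ω)}
      ≤ μ ((⋃ k ∈ (Finset.range (m+1)).filter P, {ω | X ω = k}) ∪ {ω | m < X ω}) :=
        measure_mono hsplit
    _ ≤ μ (⋃ k ∈ (Finset.range (m+1)).filter P, {ω | X ω = k}) + μ {ω | m < X ω} :=
        measure_union_le _ _
    _ = μ (⋃ k ∈ (Finset.range (m+1)).filter P, {ω | X ω = k}) := by rw [hgt, add_zero]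
    _ ≤ ∑ k ∈ (Finset.range (m+1)).filter P, μ {ω | X ω = k} :=
        measure_biUnion_finset_le _ _
    _ = ENNReal.ofReal (∑ k ∈ (Finset.range (m+1)).filter P,
          (m.choose k : ℝ) * p ^ k * (1 - p) ^ (m - k)) := by
        rw [Finset.sum_congr rfl (fun k _ => hlaw k),
          ← ENNReal.ofReal_sum_of_nonneg (fun k _ => hpmf k)]
    _ ≤ ENNReal.ofReal (Real.exp (-(t * a)) * (1 - p + p * Real.exp t) ^ m) := by
        apply ENNReal.ofReal_le_ofReal
        have step1 : ∑ k ∈ (Finset.range (m+1)).filter P,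
            (m.choose k : ℝ) * p ^ k * (1 - p) ^ (m - k)
            ≤ ∑ k ∈ (Finset.range (m+1)).filter P,
            Real.exp (t * ((k:ℝ) - a)) * ((m.choose k : ℝ) * p ^ k * (1 - p) ^ (m - k)) := by
          refine Finset.sum_le_sum fun k hk => ?_
          have hPk : P k := (Finset.mem_filter.1 hk).2
          have : (1:ℝ) ≤ Real.exp (t * ((k:ℝ) - a)) := Real.one_le_exp (hP k hPk)
          nlinarith [hpmf k]
        have step2 : ∑ k ∈ (Finset.range (m+1)).filter P,
            Real.exp (t * ((k:ℝ) - a)) * ((m.choose k : ℝ) * p ^ k * (1 - p) ^ (m - k))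
            ≤ ∑ k ∈ Finset.range (m+1),
            Real.exp (t * ((k:ℝ) - a)) * ((m.choose k : ℝ) * p ^ k * (1 - p) ^ (m - k)) := by
          refine Finset.sum_le_sum_of_subset_of_nonneg (Finset.filter_subset _ _)
            fun k _ _ => ?_
          have := hpmf k
          positivity
        have step3 : ∑ k ∈ Finset.range (m+1),
            Real.exp (t * ((k:ℝ) - a)) * ((m.choose k : ℝ) * p ^ k * (1 - p) ^ (m - k))
            = Real.exp (-(t * a)) * (1 - p + p * Real.exp t) ^ m := by
          have hbin := add_pow (p * Real.exp t) (1 - p) m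
          have hterm : ∀ k ∈ Finset.range (m+1),
              Real.exp (t * ((k:ℝ) - a)) * ((m.choose k : ℝ) * p ^ k * (1 - p) ^ (m - k))
              = Real.exp (-(t * a)) *
                ((p * Real.exp t) ^ k * (1 - p) ^ (m - k) * (m.choose k : ℝ)) := by
            intro k _
            have hpe : (p * Real.exp t) ^ k = p ^ k * Real.exp (t * k) := by
              rw [mul_pow, ← Real.exp_nat_mul, mul_comm (k:ℝ) t]
            rw [hpe, show t * ((k:ℝ) - a) = -(t * a) + t * k by ring, Real.exp_add]
            ring
          rw [Finset.sum_congr rfl hterm, ← Finset.mul_sum, ← hbin]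
          ring_nf
        linarith

lemma key_hasDerivAt (p τ : ℝ) :
    HasDerivAt (fun t => (1 - p + p * Real.exp t) * Real.exp (-(t * τ))) (p - τ) 0 := by
  have h1 : HasDerivAt (fun t : ℝ => 1 - p + p * Real.exp t) (p * Real.exp 0) 0 :=
    ((Real.hasDerivAt_exp 0).const_mul p).const_add (1 - p)
  have h2 : HasDerivAt (fun t : ℝ => -(t * τ)) (-τ) 0 := by
    simpa using ((hasDerivAt_id (0:ℝ)).mul_const τ).fun_neg
  have h3 : HasDerivAt (fun t : ℝ => Real.exp (-(t * τ))) (Real.exp (-(0*τ)) * (-τ)) 0 :=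
    h2.exp
  have := h1.fun_mul h3
  simpa using this.congr_deriv (by simp; ring)

lemma exists_t_upper (p τ : ℝ) (h : p < τ) :
    ∃ t, 0 ≤ t ∧ (1 - p + p * Real.exp t) * Real.exp (-(t * τ)) < 1 := by
  set g := fun t : ℝ => (1 - p + p * Real.exp t) * Real.exp (-(t * τ)) with hg
  have hd : HasDerivAt g (p - τ) 0 := key_hasDerivAt p τ
  have hslope : Tendsto (slope g 0) (nhdsWithin 0 {(0:ℝ)}ᶜ) (nhds (p - τ)) :=
    hasDerivAt_iff_tendsto_slope.1 hd
  have hneg : ∀ᶠ t in nhdsWithin 0 {(0:ℝ)}ᶜ, slope g 0 t < 0 :=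
    hslope.eventually (gt_mem_nhds (by linarith))
  have hmono : nhdsWithin (0:ℝ) (Set.Ioi 0) ≤ nhdsWithin 0 {(0:ℝ)}ᶜ :=
    nhdsWithin_mono 0 (fun x hx => ne_of_gt hx)
  have hev : ∀ᶠ t in nhdsWithin (0:ℝ) (Set.Ioi 0), slope g 0 t < 0 ∧ 0 < t :=
    (hneg.filter_mono hmono).and self_mem_nhdsWithin
  obtain ⟨t, hst, ht⟩ := hev.exists
  refine ⟨t, le_of_lt ht, ?_⟩
  have hg0 : g 0 = 1 := by simp [hg]
  rw [slope_def_field, sub_zero] at hst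
  have hnum : g t - g 0 < 0 := by
    rcases div_neg_iff.1 hst with ⟨h1, h2⟩ | ⟨h1, h2⟩
    · linarith
    · exact h1
  have : g t < 1 := by linarith
  exact this

lemma exists_t_lower (p τ : ℝ) (h : τ < p) :
    ∃ t, t ≤ 0 ∧ (1 - p + p * Real.exp t) * Real.exp (-(t * τ)) < 1 := by
  set g := fun t : ℝ => (1 - p + p * Real.exp t) * Real.exp (-(t * τ)) with hg
  have hd : HasDerivAt g (p - τ) 0 := key_hasDerivAt p τ
  have hslope : Tendsto (slope g 0) (nhdsWithin 0 {(0:ℝ)}ᶜ) (nhds (p - τ)) :=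
    hasDerivAt_iff_tendsto_slope.1 hd
  have hpos : ∀ᶠ t in nhdsWithin 0 {(0:ℝ)}ᶜ, 0 < slope g 0 t :=
    hslope.eventually (lt_mem_nhds (by linarith))
  have hmono : nhdsWithin (0:ℝ) (Set.Iio 0) ≤ nhdsWithin 0 {(0:ℝ)}ᶜ :=
    nhdsWithin_mono 0 (fun x hx => ne_of_lt hx)
  have hev : ∀ᶠ t in nhdsWithin (0:ℝ) (Set.Iio 0), 0 < slope g 0 t ∧ t < 0 :=
    (hpos.filter_mono hmono).and self_mem_nhdsWithin
  obtain ⟨t, hst, ht⟩ := hev.exists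
  refine ⟨t, le_of_lt ht, ?_⟩
  have hg0 : g 0 = 1 := by simp [hg]
  rw [slope_def_field, sub_zero] at hst
  have hnum : g t - g 0 < 0 := by
    rcases div_pos_iff.1 hst with ⟨h1, h2⟩ | ⟨h1, h2⟩
    · linarith
    · exact h1
  have : g t < 1 := by linarith
  exact this

lemma geom_mul_tendsto_zero (C r : ℝ) (hr0 : 0 < r) (hr1 : r < 1) (m : ℕ → ℕ)
    (hm : Tendsto (fun n : ℕ => (m n : ℝ) / Real.log n) atTop atTop) :
    Tendsto (fun n : ℕ => C * ((n : ℝ) * r ^ (m n))) atTop (nhds 0) := by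
  have hlr : Real.log r < 0 := Real.log_neg hr0 hr1
  have hlogn : Tendsto (fun n : ℕ => Real.log n) atTop atTop :=
    Real.tendsto_log_atTop.comp tendsto_natCast_atTop_atTop
  have hfac : Tendsto (fun n : ℕ => 1 + ((m n : ℝ) / Real.log n) * Real.log r) atTop atBot :=
    tendsto_atBot_add_const_left _ 1 (hm.atTop_mul_const_of_neg hlr)
  have h1 : Tendsto (fun n : ℕ =>
      Real.log n * (1 + ((m n : ℝ) / Real.log n) * Real.log r)) atTop atBot :=
    hlogn.atTop_mul_atBot₀ hfac
  have h2 : (fun n : ℕ => Real.log n * (1 + ((m n : ℝ) / Real.log n) * Real.log r))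
      =ᶠ[atTop] fun n : ℕ => Real.log n + (m n : ℝ) * Real.log r := by
    filter_upwards [eventually_ge_atTop 2] with n hn
    have hn2 : (2:ℝ) ≤ (n:ℝ) := by exact_mod_cast hn
    have hlog : Real.log n ≠ 0 := by
      have : (0:ℝ) < Real.log n := Real.log_pos (by linarith)
      linarith
    field_simp
  have h3 : Tendsto (fun n : ℕ => Real.log n + (m n : ℝ) * Real.log r) atTop atBot :=
    h1.congr' h2
  have h4 : Tendsto (fun n : ℕ => Real.exp (Real.log n + (m n : ℝ) * Real.log r))
      atTop (nhds 0) := Real.tendsto_exp_atBot.comp h3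
  have h5 : (fun n : ℕ => Real.exp (Real.log n + (m n : ℝ) * Real.log r))
      =ᶠ[atTop] fun n : ℕ => (n : ℝ) * r ^ (m n) := by
    filter_upwards [eventually_ge_atTop 1] with n hn
    have hn0 : (0:ℝ) < (n:ℝ) := by exact_mod_cast Nat.lt_of_lt_of_le Nat.zero_lt_one hn
    rw [Real.exp_add, Real.exp_log hn0, Real.exp_nat_mul, Real.exp_log hr0]
  have h6 : Tendsto (fun n : ℕ => (n : ℝ) * r ^ (m n)) atTop (nhds 0) := h4.congr' h5
  simpa using (tendsto_const_nhds (x := C) (f := atTop)).mul h6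

/-- Distribution-aware replica detection: fix `0 < p₁ < τ < p₀ < 1` and `C > 0`; for each `n`
let `H_1,…,H_{N_n}` (`N_n ≤ Cn`) be independent, each `Binom(m_n, p₁)` (for `j ∈ J_n`) or
`Binom(m_n, p₀)` (for `j ∉ J_n`), with `m_n / log n → ∞`. Classifying `j` as a `p₁`-index iff
`H_j ≤ m_n τ`, the probability of any misclassification tends to `0`. -/
theorem stmt_5 (p₀ p₁ τ C : ℝ) (h0 : 0 < p₁) (h1 : p₁ < τ) (h2 : τ < p₀) (h3 : p₀ < 1)
    (hC : 0 < C)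
    (Ω : ℕ → Type*) [∀ n, MeasurableSpace (Ω n)]
    (μ : ∀ n, Measure (Ω n)) [∀ n, IsProbabilityMeasure (μ n)]
    (N : ℕ → ℕ) (hN : ∀ n, (N n : ℝ) ≤ C * n)
    (m : ℕ → ℕ) (hmpos : ∀ n, 1 ≤ m n)
    (hm : Tendsto (fun n : ℕ => (m n : ℝ) / Real.log n) atTop atTop)
    (J : ∀ n, Finset (Fin (N n))) (H : ∀ n, Fin (N n) → Ω n → ℕ)
    (hmeas : ∀ n j, Measurable (H n j))
    (hindep : ∀ n, iIndepFun (H n) (μ n))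
    (hlaw1 : ∀ n, ∀ j ∈ J n, ∀ k : ℕ,
      μ n {ω | H n j ω = k}
        = ENNReal.ofReal (((m n).choose k : ℝ) * p₁ ^ k * (1 - p₁) ^ (m n - k)))
    (hlaw0 : ∀ n, ∀ j ∉ J n, ∀ k : ℕ,
      μ n {ω | H n j ω = k}
        = ENNReal.ofReal (((m n).choose k : ℝ) * p₀ ^ k * (1 - p₀) ^ (m n - k))) :
    Tendsto
      (fun n : ℕ =>
        μ n {ω | ∃ j : Fin (N n), ¬ (j ∈ J n ↔ (H n j ω : ℝ) ≤ (m n : ℝ) * τ)})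
      atTop (nhds 0) := by
  classical
  obtain ⟨t₁, ht₁, hB₁⟩ := exists_t_upper p₁ τ h1
  obtain ⟨t₀, ht₀, hB₀⟩ := exists_t_lower p₀ τ h2
  set B₁ : ℝ := (1 - p₁ + p₁ * Real.exp t₁) * Real.exp (-(t₁ * τ)) with hB₁def
  set B₀ : ℝ := (1 - p₀ + p₀ * Real.exp t₀) * Real.exp (-(t₀ * τ)) with hB₀def
  have hp₁1 : p₁ < 1 := by linarith
  have hp₀0 : 0 < p₀ := by linarith
  have hB₁pos : 0 < B₁ := by
    have h := Real.exp_pos t₁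
    have hf : (0:ℝ) < 1 - p₁ + p₁ * Real.exp t₁ := by nlinarith
    exact mul_pos hf (Real.exp_pos _)
  have hB₀pos : 0 < B₀ := by
    have h := Real.exp_pos t₀
    have hf : (0:ℝ) < 1 - p₀ + p₀ * Real.exp t₀ := by nlinarith
    exact mul_pos hf (Real.exp_pos _)
  set r : ℝ := max B₁ B₀ with hrdef
  have hr0 : 0 < r := lt_max_of_lt_left hB₁pos
  have hr1 : r < 1 := max_lt hB₁ hB₀
  -- per-n bound
  have key : ∀ n, μ n {ω | ∃ j : Fin (N n), ¬ (j ∈ J n ↔ (H n j ω : ℝ) ≤ (m n : ℝ) * τ)}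
      ≤ ENNReal.ofReal (C * ((n : ℝ) * r ^ (m n))) := by
    intro n
    have hj : ∀ j : Fin (N n),
        μ n {ω | ¬ (j ∈ J n ↔ (H n j ω : ℝ) ≤ (m n : ℝ) * τ)}
          ≤ ENNReal.ofReal (r ^ (m n)) := by
      intro j
      by_cases hjJ : j ∈ J n
      · -- upper tail for p₁
        have hsub : {ω | ¬ (j ∈ J n ↔ (H n j ω : ℝ) ≤ (m n : ℝ) * τ)}
            ⊆ {ω | (fun k : ℕ => (m n : ℝ) * τ ≤ (k : ℝ)) (H n j ω)} := by
          intro ω hω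
          simp only [Set.mem_setOf_eq, hjJ, true_iff] at hω ⊢
          exact le_of_lt (not_le.1 hω)
        have hb := binom_tail_bound (μ n) (H n j) (hmeas n j) (m n) p₁ h0 hp₁1
          (hlaw1 n j hjJ) (fun k : ℕ => (m n : ℝ) * τ ≤ (k : ℝ)) t₁ ((m n : ℝ) * τ)
          (fun k hk => mul_nonneg ht₁ (by linarith))
        have heq : Real.exp (-(t₁ * ((m n : ℝ) * τ))) * (1 - p₁ + p₁ * Real.exp t₁) ^ (m n)
            = B₁ ^ (m n) := by
          rw [show -(t₁ * ((m n : ℝ) * τ)) = (m n : ℝ) * (-(t₁ * τ)) by ring,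
            Real.exp_nat_mul, hB₁def, mul_pow]
          ring
        calc μ n {ω | ¬ (j ∈ J n ↔ (H n j ω : ℝ) ≤ (m n : ℝ) * τ)}
            ≤ μ n {ω | (fun k : ℕ => (m n : ℝ) * τ ≤ (k : ℝ)) (H n j ω)} :=
              measure_mono hsub
          _ ≤ ENNReal.ofReal (Real.exp (-(t₁ * ((m n : ℝ) * τ)))
                * (1 - p₁ + p₁ * Real.exp t₁) ^ (m n)) := hb
          _ ≤ ENNReal.ofReal (r ^ (m n)) := by
              rw [heq]
              exact ENNReal.ofReal_le_ofReal
                (pow_le_pow_left₀ (le_of_lt hB₁pos) (le_max_left _ _) _)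
      · -- lower tail for p₀
        have hsub : {ω | ¬ (j ∈ J n ↔ (H n j ω : ℝ) ≤ (m n : ℝ) * τ)}
            ⊆ {ω | (fun k : ℕ => (k : ℝ) ≤ (m n : ℝ) * τ) (H n j ω)} := by
          intro ω hω
          simp only [Set.mem_setOf_eq, hjJ, false_iff, not_not] at hω ⊢
          exact hω
        have hb := binom_tail_bound (μ n) (H n j) (hmeas n j) (m n) p₀ hp₀0 h3
          (hlaw0 n j hjJ) (fun k : ℕ => (k : ℝ) ≤ (m n : ℝ) * τ) t₀ ((m n : ℝ) * τ)
          (fun k hk => by nlinarith)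
        have heq : Real.exp (-(t₀ * ((m n : ℝ) * τ))) * (1 - p₀ + p₀ * Real.exp t₀) ^ (m n)
            = B₀ ^ (m n) := by
          rw [show -(t₀ * ((m n : ℝ) * τ)) = (m n : ℝ) * (-(t₀ * τ)) by ring,
            Real.exp_nat_mul, hB₀def, mul_pow]
          ring
        calc μ n {ω | ¬ (j ∈ J n ↔ (H n j ω : ℝ) ≤ (m n : ℝ) * τ)}
            ≤ μ n {ω | (fun k : ℕ => (k : ℝ) ≤ (m n : ℝ) * τ) (H n j ω)} :=
              measure_mono hsub
          _ ≤ ENNReal.ofReal (Real.exp (-(t₀ * ((m n : ℝ) * τ)))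
                * (1 - p₀ + p₀ * Real.exp t₀) ^ (m n)) := hb
          _ ≤ ENNReal.ofReal (r ^ (m n)) := by
              rw [heq]
              exact ENNReal.ofReal_le_ofReal
                (pow_le_pow_left₀ (le_of_lt hB₀pos) (le_max_right _ _) _)
    have hunion : {ω | ∃ j : Fin (N n), ¬ (j ∈ J n ↔ (H n j ω : ℝ) ≤ (m n : ℝ) * τ)}
        = ⋃ j : Fin (N n), {ω | ¬ (j ∈ J n ↔ (H n j ω : ℝ) ≤ (m n : ℝ) * τ)} := by
      ext ω; simp
    calc μ n {ω | ∃ j : Fin (N n), ¬ (j ∈ J n ↔ (H n j ω : ℝ) ≤ (m n : ℝ) * τ)}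
        ≤ ∑' (j : Fin (N n)), μ n {ω | ¬ (j ∈ J n ↔ (H n j ω : ℝ) ≤ (m n : ℝ) * τ)} := by
          rw [hunion]; exact measure_iUnion_le _
      _ ≤ ∑' (j : Fin (N n)), ENNReal.ofReal (r ^ (m n)) := ENNReal.tsum_le_tsum hj
      _ = (N n : ENNReal) * ENNReal.ofReal (r ^ (m n)) := by
          rw [tsum_fintype, Finset.sum_const, Finset.card_univ, Fintype.card_fin,
            nsmul_eq_mul]
      _ ≤ ENNReal.ofReal (C * ((n : ℝ) * r ^ (m n))) := by
          rw [show ((N n : ENNReal)) = ENNReal.ofReal (N n : ℝ) by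
              simp [ENNReal.ofReal_natCast],
            ← ENNReal.ofReal_mul (by positivity)]
          apply ENNReal.ofReal_le_ofReal
          have hrm : (0:ℝ) ≤ r ^ (m n) := by positivity
          calc (N n : ℝ) * r ^ (m n) ≤ (C * n) * r ^ (m n) :=
                mul_le_mul_of_nonneg_right (hN n) hrm
            _ = C * ((n:ℝ) * r ^ (m n)) := by ring
  have hlim := geom_mul_tendsto_zero C r hr0 hr1 m hm
  have hlim' : Tendsto (fun n : ℕ => ENNReal.ofReal (C * ((n : ℝ) * r ^ (m n))))
      atTop (nhds 0) := by
    simpa using ENNReal.tendsto_ofReal hlim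
  exact tendsto_of_tendsto_of_tendsto_of_le_of_le tendsto_const_nhds hlim'
    (fun n => zero_le) key
end

section
/- Let 𝔛 be a finite set with |𝔛| ≥ 2 and let p_{X,Y} be a joint pmf on 𝔛 × 𝔛 with marginals p_X and p_Y. If p_{X,Y} ≠ p_X·p_Y, then there exists a bijection Φ : 𝔛 → 𝔛 such that Σ_{x∈𝔛} p_{X,Y}(x, Φ(x)) ≠ Σ_{x∈𝔛} p_X(x) p_Y(Φ(x)). -/
/-- If a joint pmf `p_{X,Y}` on `𝔛 × 𝔛` (with `|𝔛| ≥ 2`) is not the product of its marginals,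
then there exists a bijective remapping `Φ : 𝔛 ≃ 𝔛` such that
`∑ x, p_{X,Y}(x, Φ x) ≠ ∑ x, p_X(x) p_Y(Φ x)`. -/
theorem stmt_8 {𝔛 : Type*} [Fintype 𝔛] (hcard : 2 ≤ Fintype.card 𝔛)
    (pXY : 𝔛 → 𝔛 → ℝ)
    (hnonneg : ∀ x y, 0 ≤ pXY x y) (hsum : ∑ x, ∑ y, pXY x y = 1)
    (pX : 𝔛 → ℝ) (hpX : ∀ x, pX x = ∑ y, pXY x y)
    (pY : 𝔛 → ℝ) (hpY : ∀ y, pY y = ∑ x, pXY x y)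
    (hdep : ∃ x y, pXY x y ≠ pX x * pY y) :
    ∃ Φ : 𝔛 ≃ 𝔛, ∑ x, pXY x (Φ x) ≠ ∑ x, pX x * pY (Φ x) := by
  classical
  by_contra hcon
  push_neg at hcon
  set f : 𝔛 → 𝔛 → ℝ := fun x y => pXY x y - pX x * pY y with hf
  have hperm : ∀ Φ : 𝔛 ≃ 𝔛, ∑ x, f x (Φ x) = 0 := by
    intro Φ
    simp only [hf, Finset.sum_sub_distrib, hcon Φ, sub_self]
  have hY1 : ∑ y, pY y = 1 := by
    simp_rw [hpY]
    rw [Finset.sum_comm]; exact hsum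
  have hrow : ∀ x, ∑ y, f x y = 0 := by
    intro x
    simp only [hf, Finset.sum_sub_distrib, ← Finset.mul_sum, hY1, mul_one, hpX, sub_self]
  have hcol : ∀ y, ∑ x, f x y = 0 := by
    intro y
    have hX1 : ∑ x, pX x = 1 := by simp_rw [hpX]; exact hsum
    simp only [hf, Finset.sum_sub_distrib, ← Finset.sum_mul, hX1, one_mul, hpY, sub_self]
  have htot : ∑ x, ∑ y, f x y = 0 := by simp [hrow]
  -- exchange identity
  have hex : ∀ a b x y, f a b + f x y = f a y + f x b := by
    intro a b x y
    by_cases hxa : x = a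
    · subst hxa; ring
    by_cases hyb : y = b
    · subst hyb; ring
    -- construct σ with σ a = b, σ x = y
    set c : 𝔛 := Equiv.swap a b x with hc
    have hcb : c ≠ b := by
      rcases eq_or_ne a b with rfl | hab
      · simpa [hc] using hxa
      · rcases eq_or_ne x b with rfl | hxb
        · simpa [hc] using hab
        · rw [hc, Equiv.swap_apply_of_ne_of_ne hxa hxb]; exact hxb
    set σ : 𝔛 ≃ 𝔛 := (Equiv.swap a b).trans (Equiv.swap c y) with hσ
    have hσa : σ a = b := by
      simp [hσ, Equiv.swap_apply_of_ne_of_ne hcb.symm (Ne.symm hyb)]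
    have hσx : σ x = y := by
      simp [hσ, ← hc]
    set σ' : 𝔛 ≃ 𝔛 := (Equiv.swap a x).trans σ with hσ'
    have hσ'a : σ' a = y := by simp [hσ', hσx]
    have hσ'x : σ' x = b := by simp [hσ', hσa]
    have hsplit : ∀ τ : 𝔛 ≃ 𝔛, ∑ z, f z (τ z)
        = f a (τ a) + (f x (τ x) + ∑ z ∈ (Finset.univ.erase a).erase x, f z (τ z)) := by
      intro τ
      have e1 : ∑ z ∈ Finset.univ.erase a, f z (τ z)
          = f x (τ x) + ∑ z ∈ (Finset.univ.erase a).erase x, f z (τ z) :=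
        (Finset.add_sum_erase _ (fun z => f z (τ z))
          (Finset.mem_erase.mpr ⟨hxa, Finset.mem_univ x⟩)).symm
      have e2 : ∑ z : 𝔛, f z (τ z) = f a (τ a) + ∑ z ∈ Finset.univ.erase a, f z (τ z) :=
        (Finset.add_sum_erase _ (fun z => f z (τ z)) (Finset.mem_univ a)).symm
      rw [e2, e1]
    have hagree : ∑ z ∈ (Finset.univ.erase a).erase x, f z (σ z)
        = ∑ z ∈ (Finset.univ.erase a).erase x, f z (σ' z) := by
      apply Finset.sum_congr rfl
      intro z hz
      rw [Finset.mem_erase, Finset.mem_erase] at hz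
      rw [hσ']
      simp [Equiv.swap_apply_of_ne_of_ne hz.2.1 hz.1]
    have h1 := hperm σ
    have h2 := hperm σ'
    rw [hsplit σ, hσa, hσx] at h1
    rw [hsplit σ', hσ'a, hσ'x, ← hagree] at h2
    linarith
  obtain ⟨a, b, hab⟩ := hdep
  have hab' : f a b ≠ 0 := sub_ne_zero.mpr hab
  have key : (Fintype.card 𝔛 : ℝ)^2 * f a b = 0 := by
    have h1 : ∑ x, ∑ y, (f a b + f x y) = ∑ x, ∑ y, (f a y + f x b) := by
      apply Finset.sum_congr rfl; intro x _
      apply Finset.sum_congr rfl; intro y _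
      exact hex a b x y
    have hL : ∑ x : 𝔛, ∑ y : 𝔛, (f a b + f x y) = (Fintype.card 𝔛 : ℝ)^2 * f a b := by
      simp only [Finset.sum_add_distrib, htot]
      simp [Finset.card_univ, Finset.sum_const, nsmul_eq_mul]
      ring
    have hR : ∑ x : 𝔛, ∑ y : 𝔛, (f a y + f x b) = 0 := by
      simp only [Finset.sum_add_distrib, hrow a, Finset.sum_const, nsmul_eq_mul]
      rw [← Finset.mul_sum, hcol b]
      simp
    rw [hL, hR] at h1
    exact h1
  have hn : (Fintype.card 𝔛 : ℝ) ≠ 0 := by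
    have : 0 < Fintype.card 𝔛 := by omega
    positivity
  have := mul_eq_zero.mp key
  rcases this with h | h
  · exact (pow_ne_zero 2 hn) h
  · exact hab' h
end

section
/- Let 0 < α < 1 and p₀ ≠ p₁ be real numbers, define F_k = α p₀^k + (1−α) p₁^k for k = 1, 2, 3 and A = (F₃ − F₁F₂)/(F₂ − F₁²). Then A² − 4AF₁ + 4F₂ = (p₀ − p₁)², and consequently (A + √(A² − 4AF₁ + 4F₂))/2 = max(p₀, p₁) and (A − √(A² − 4AF₁ + 4F₂))/2 = min(p₀, p₁). -/
/-- With `F_k = α p₀^k + (1-α) p₁^k` and `A = (F₃ - F₁F₂)/(F₂ - F₁²)`, one has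
`A² - 4AF₁ + 4F₂ = (p₀ - p₁)²`, hence `(A + √(A² - 4AF₁ + 4F₂))/2 = max p₀ p₁` and
`(A - √(A² - 4AF₁ + 4F₂))/2 = min p₀ p₁`. -/
theorem stmt_11 (α p₀ p₁ : ℝ) (hα0 : 0 < α) (hα1 : α < 1) (hne : p₀ ≠ p₁)
    (F : ℕ → ℝ) (hF : ∀ k, F k = α * p₀ ^ k + (1 - α) * p₁ ^ k)
    (A : ℝ) (hA : A = (F 3 - F 1 * F 2) / (F 2 - (F 1) ^ 2)) :
    A ^ 2 - 4 * A * F 1 + 4 * F 2 = (p₀ - p₁) ^ 2 ∧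
      (A + Real.sqrt (A ^ 2 - 4 * A * F 1 + 4 * F 2)) / 2 = max p₀ p₁ ∧
      (A - Real.sqrt (A ^ 2 - 4 * A * F 1 + 4 * F 2)) / 2 = min p₀ p₁ := by
  have hd : F 2 - (F 1) ^ 2 = α * (1 - α) * (p₀ - p₁) ^ 2 := by
    simp only [hF]; ring
  have hdne : F 2 - (F 1) ^ 2 ≠ 0 := by
    rw [hd]
    have h := sub_ne_zero.mpr hne
    have h1 : (1:ℝ) - α > 0 := by linarith
    positivity
  have hAeq : A = p₀ + p₁ := by
    rw [hA, div_eq_iff hdne]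
    simp only [hF]; ring
  have hkey : A ^ 2 - 4 * A * F 1 + 4 * F 2 = (p₀ - p₁) ^ 2 := by
    rw [hAeq]; simp only [hF]; ring
  refine ⟨hkey, ?_, ?_⟩ <;> rw [hkey, Real.sqrt_sq_eq_abs, hAeq]
  · rcases abs_cases (p₀ - p₁) with ⟨h, h2⟩ | ⟨h, h2⟩ <;> rw [h]
    · rw [max_eq_left (by linarith : p₁ ≤ p₀)]; ring
    · rw [max_eq_right (by linarith : p₀ ≤ p₁)]; ring
  · rcases abs_cases (p₀ - p₁) with ⟨h, h2⟩ | ⟨h, h2⟩ <;> rw [h]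
    · rw [min_eq_right (by linarith : p₁ ≤ p₀)]; ring
    · rw [min_eq_left (by linarith : p₀ ≤ p₁)]; ring
end

section
/- Let q₀, q₁ ∈ (0,1) with q₀ ≠ q₁. For each n, let Λ_n be a positive integer with Λ_n / log n → ∞, set τ̂_n = 2 Λ_n^{2/3} (log n)^{1/3}, let K_n ≤ n, let r₁,…,r_{K_n} be distinct indices in {1,…,n}, and let {L_{i,j} : 1 ≤ i ≤ n, 1 ≤ j ≤ K_n} be mutually independent random variables with L_{r_j, j} ~ Binom(Λ_n, q₁) for each j and L_{i,j} ~ Binom(Λ_n, q₀) for all i ≠ r_j. Then P( for every j ∈ {1,…,K_n}: |L_{r_j,j} − Λ_n q₀| > τ̂_n, and for every i ≠ r_j: |L_{i,j} − Λ_n q₀| ≤ τ̂_n ) → 1 as n → ∞. -/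
open MeasureTheory ProbabilityTheory Filter

open Finset
open scoped ENNReal NNReal
open Finset

lemma pmf_nonneg (q : ℝ) (hq0 : 0 ≤ q) (hq1 : q ≤ 1) (N k : ℕ) :
    0 ≤ (N.choose k : ℝ) * q ^ k * (1 - q) ^ (N - k) :=
  mul_nonneg (mul_nonneg (Nat.cast_nonneg _) (pow_nonneg hq0 _)) (pow_nonneg (by linarith) _)

lemma exp_sub_one_le_upper {l : ℝ} (h0 : 0 ≤ l) (h1 : l ≤ 1/2) :
    Real.exp l - 1 ≤ l + 2*l^2 := by
  have h3 : Real.exp l * (1 - l) ≤ 1 := by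
    have h2 := Real.add_one_le_exp (-l)
    have h4 : Real.exp l * Real.exp (-l) = 1 := by rw [← Real.exp_add]; simp
    nlinarith [Real.exp_pos l]
  nlinarith [Real.exp_pos l, sq_nonneg l]

lemma exp_sub_one_le_lower {l : ℝ} (h0 : 0 ≤ l) :
    Real.exp (-l) - 1 ≤ -l + l^2 := by
  have h3 : Real.exp (-l) * (1 + l) ≤ 1 := by
    have h2 := Real.add_one_le_exp l
    have h4 : Real.exp (-l) * Real.exp l = 1 := by rw [← Real.exp_add]; simp
    nlinarith [Real.exp_pos (-l)]
  nlinarith [Real.exp_pos (-l), sq_nonneg l]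

lemma mgf_sum (q s : ℝ) (N : ℕ) :
    ∑ k ∈ range (N+1), (N.choose k : ℝ) * q ^ k * (1 - q) ^ (N - k) * Real.exp (s * k)
      = (q * Real.exp s + (1 - q)) ^ N := by
  rw [add_pow]
  refine Finset.sum_congr rfl fun k _ => ?_
  rw [mul_pow, mul_comm s (k:ℝ), ← Real.exp_nat_mul]
  ring

lemma chernoff_upper (q : ℝ) (hq0 : 0 ≤ q) (hq1 : q ≤ 1) (N : ℕ) (hN : 1 ≤ N)
    (t : ℝ) (ht0 : 0 ≤ t) (htN : t ≤ 2*N) :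
    ∑ k ∈ range (N+1),
      (if (N:ℝ)*q + t < (k:ℝ) then (N.choose k : ℝ) * q ^ k * (1 - q) ^ (N - k) else 0)
      ≤ Real.exp (-(t^2) / (8*N)) := by
  have hN0 : (0:ℝ) < N := by exact_mod_cast hN
  set l : ℝ := t/(4*N) with hl
  have hl0 : 0 ≤ l := by positivity
  have hl2 : l ≤ 1/2 := by rw [hl, div_le_iff₀ (by positivity)]; linarith
  set X : ℝ := (N:ℝ)*q + t with hX
  have step1 : ∀ k ∈ range (N+1),
      (if (N:ℝ)*q + t < (k:ℝ) then (N.choose k : ℝ) * q ^ k * (1 - q) ^ (N - k) else 0)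
        ≤ (N.choose k : ℝ) * q ^ k * (1 - q) ^ (N - k) * Real.exp (l*((k:ℝ) - X)) := by
    intro k _
    have hpm := pmf_nonneg q hq0 hq1 N k
    split_ifs with h
    · nth_rewrite 1 [← mul_one ((N.choose k : ℝ) * q ^ k * (1 - q) ^ (N - k))]
      exact mul_le_mul_of_nonneg_left (Real.one_le_exp (mul_nonneg hl0 (by linarith))) hpm
    · exact mul_nonneg hpm (Real.exp_pos _).le
  calc ∑ k ∈ range (N+1), (if (N:ℝ)*q + t < (k:ℝ) then (N.choose k : ℝ) * q ^ k * (1 - q) ^ (N - k) else 0)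
      ≤ ∑ k ∈ range (N+1), (N.choose k : ℝ) * q ^ k * (1 - q) ^ (N - k) * Real.exp (l*((k:ℝ) - X)) :=
        Finset.sum_le_sum step1
    _ = Real.exp (-(l*X)) * ∑ k ∈ range (N+1), (N.choose k : ℝ) * q ^ k * (1 - q) ^ (N - k) * Real.exp (l*k) := by
        rw [Finset.mul_sum]
        refine Finset.sum_congr rfl fun k _ => ?_
        have : l*((k:ℝ) - X) = -(l*X) + l*k := by ring
        rw [this, Real.exp_add]; ring
    _ = Real.exp (-(l*X)) * (q * Real.exp l + (1 - q)) ^ N := by rw [mgf_sum]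
    _ ≤ Real.exp (-(l*X)) * Real.exp ((N:ℝ) * (q*(l+2*l^2))) := by
        refine mul_le_mul_of_nonneg_left ?_ (Real.exp_pos _).le
        have hbase0 : 0 ≤ q * Real.exp l + (1 - q) :=
          add_nonneg (mul_nonneg hq0 (Real.exp_pos _).le) (by linarith)
        have hbase : q * Real.exp l + (1 - q) ≤ Real.exp (q * (Real.exp l - 1)) := by
          have := Real.add_one_le_exp (q * (Real.exp l - 1))
          linarith
        calc (q * Real.exp l + (1 - q)) ^ N ≤ (Real.exp (q * (Real.exp l - 1))) ^ N :=
              pow_le_pow_left₀ hbase0 hbase N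
          _ = Real.exp ((N:ℝ) * (q * (Real.exp l - 1))) := (Real.exp_nat_mul _ N).symm
          _ ≤ Real.exp ((N:ℝ) * (q*(l+2*l^2))) := by
              apply Real.exp_le_exp.mpr
              exact mul_le_mul_of_nonneg_left
                (mul_le_mul_of_nonneg_left (by linarith [exp_sub_one_le_upper hl0 hl2]) hq0)
                (by positivity)
    _ ≤ Real.exp (-(t^2) / (8*N)) := by
        rw [← Real.exp_add]
        apply Real.exp_le_exp.mpr
        have h5 : -(l*X) + (N:ℝ)*(q*(l+2*l^2)) = -(l*t) + 2*(N:ℝ)*q*l^2 := by rw [hX]; ring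
        rw [h5, hl]
        have hA : 0 ≤ t^2/(8*(N:ℝ)) := by positivity
        have e : -(t/(4*(N:ℝ))*t) + 2*(N:ℝ)*q*(t/(4*(N:ℝ)))^2 = -(t^2/(8*(N:ℝ))) * (2 - q) := by
          field_simp; ring
        rw [e, neg_div]
        nlinarith [mul_nonneg hA (by linarith : (0:ℝ) ≤ 1 - q)]

lemma chernoff_lower (q : ℝ) (hq0 : 0 ≤ q) (hq1 : q ≤ 1) (N : ℕ) (hN : 1 ≤ N)
    (t : ℝ) (ht0 : 0 ≤ t) (htN : t ≤ 2*N) :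
    ∑ k ∈ range (N+1),
      (if (k:ℝ) < (N:ℝ)*q - t then (N.choose k : ℝ) * q ^ k * (1 - q) ^ (N - k) else 0)
      ≤ Real.exp (-(t^2) / (8*N)) := by
  have hN0 : (0:ℝ) < N := by exact_mod_cast hN
  set l : ℝ := t/(4*N) with hl
  have hl0 : 0 ≤ l := by positivity
  set X : ℝ := (N:ℝ)*q - t with hX
  have step1 : ∀ k ∈ range (N+1),
      (if (k:ℝ) < (N:ℝ)*q - t then (N.choose k : ℝ) * q ^ k * (1 - q) ^ (N - k) else 0)
        ≤ (N.choose k : ℝ) * q ^ k * (1 - q) ^ (N - k) * Real.exp ((-l)*((k:ℝ) - X)) := by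
    intro k _
    have hpm := pmf_nonneg q hq0 hq1 N k
    split_ifs with h
    · nth_rewrite 1 [← mul_one ((N.choose k : ℝ) * q ^ k * (1 - q) ^ (N - k))]
      refine mul_le_mul_of_nonneg_left (Real.one_le_exp ?_) hpm
      have : (0:ℝ) ≤ X - k := by linarith
      nlinarith
    · exact mul_nonneg hpm (Real.exp_pos _).le
  calc ∑ k ∈ range (N+1), (if (k:ℝ) < (N:ℝ)*q - t then (N.choose k : ℝ) * q ^ k * (1 - q) ^ (N - k) else 0)
      ≤ ∑ k ∈ range (N+1), (N.choose k : ℝ) * q ^ k * (1 - q) ^ (N - k) * Real.exp ((-l)*((k:ℝ) - X)) :=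
        Finset.sum_le_sum step1
    _ = Real.exp (l*X) * ∑ k ∈ range (N+1), (N.choose k : ℝ) * q ^ k * (1 - q) ^ (N - k) * Real.exp ((-l)*k) := by
        rw [Finset.mul_sum]
        refine Finset.sum_congr rfl fun k _ => ?_
        have : (-l)*((k:ℝ) - X) = l*X + (-l)*k := by ring
        rw [this, Real.exp_add]; ring
    _ = Real.exp (l*X) * (q * Real.exp (-l) + (1 - q)) ^ N := by rw [mgf_sum]
    _ ≤ Real.exp (l*X) * Real.exp ((N:ℝ) * (q*(-l+l^2))) := by
        refine mul_le_mul_of_nonneg_left ?_ (Real.exp_pos _).le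
        have hbase0 : 0 ≤ q * Real.exp (-l) + (1 - q) :=
          add_nonneg (mul_nonneg hq0 (Real.exp_pos _).le) (by linarith)
        have hbase : q * Real.exp (-l) + (1 - q) ≤ Real.exp (q * (Real.exp (-l) - 1)) := by
          have := Real.add_one_le_exp (q * (Real.exp (-l) - 1))
          linarith
        calc (q * Real.exp (-l) + (1 - q)) ^ N ≤ (Real.exp (q * (Real.exp (-l) - 1))) ^ N :=
              pow_le_pow_left₀ hbase0 hbase N
          _ = Real.exp ((N:ℝ) * (q * (Real.exp (-l) - 1))) := (Real.exp_nat_mul _ N).symm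
          _ ≤ Real.exp ((N:ℝ) * (q*(-l+l^2))) := by
              apply Real.exp_le_exp.mpr
              exact mul_le_mul_of_nonneg_left
                (mul_le_mul_of_nonneg_left (by linarith [exp_sub_one_le_lower hl0]) hq0)
                (by positivity)
    _ ≤ Real.exp (-(t^2) / (8*N)) := by
        rw [← Real.exp_add]
        apply Real.exp_le_exp.mpr
        have h5 : l*X + (N:ℝ)*(q*(-l+l^2)) = -(l*t) + (N:ℝ)*q*l^2 := by rw [hX]; ring
        rw [h5, hl]
        have hA : 0 ≤ t^2/(8*(N:ℝ)) := by positivity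
        have hB : 0 ≤ t^2/(16*(N:ℝ)) := by positivity
        have e : -(t/(4*(N:ℝ))*t) + (N:ℝ)*q*(t/(4*(N:ℝ)))^2
            = -(t^2/(4*(N:ℝ))) + (t^2/(16*(N:ℝ))) * q := by
          field_simp; ring
        rw [e, neg_div]
        have e2 : t^2/(4*(N:ℝ)) = 2*(t^2/(8*(N:ℝ))) := by ring
        have e3 : t^2/(16*(N:ℝ)) ≤ t^2/(8*(N:ℝ)) := by
          apply div_le_div_of_nonneg_left (sq_nonneg t) (by positivity) (by linarith)
        nlinarith [mul_nonneg hB (by linarith : (0:ℝ) ≤ 1 - q)]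

lemma binom_tail (q : ℝ) (hq0 : 0 ≤ q) (hq1 : q ≤ 1) (N : ℕ) (hN : 1 ≤ N)
    (t : ℝ) (ht0 : 0 ≤ t) (htN : t ≤ 2*N) :
    ∑ k ∈ range (N+1),
      (if t < |(k:ℝ) - (N:ℝ)*q| then (N.choose k : ℝ) * q ^ k * (1 - q) ^ (N - k) else 0)
      ≤ 2 * Real.exp (-(t^2) / (8*N)) := by
  have split : ∀ k ∈ range (N+1),
      (if t < |(k:ℝ) - (N:ℝ)*q| then (N.choose k : ℝ) * q ^ k * (1 - q) ^ (N - k) else 0)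
        ≤ (if (N:ℝ)*q + t < (k:ℝ) then (N.choose k : ℝ) * q ^ k * (1 - q) ^ (N - k) else 0)
          + (if (k:ℝ) < (N:ℝ)*q - t then (N.choose k : ℝ) * q ^ k * (1 - q) ^ (N - k) else 0) := by
    intro k _
    have hpm := pmf_nonneg q hq0 hq1 N k
    split_ifs with h h1 h2 h1 h2 <;> try linarith
    · exfalso
      rcases lt_abs.mp h with h' | h' <;> [skip; rw [neg_sub] at h'] <;> linarith
  calc _ ≤ _ := Finset.sum_le_sum split
    _ = (∑ k ∈ range (N+1), (if (N:ℝ)*q + t < (k:ℝ) then (N.choose k : ℝ) * q ^ k * (1 - q) ^ (N - k) else 0))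
        + ∑ k ∈ range (N+1), (if (k:ℝ) < (N:ℝ)*q - t then (N.choose k : ℝ) * q ^ k * (1 - q) ^ (N - k) else 0) :=
      Finset.sum_add_distrib
    _ ≤ Real.exp (-(t^2) / (8*N)) + Real.exp (-(t^2) / (8*N)) :=
      add_le_add (chernoff_upper q hq0 hq1 N hN t ht0 htN) (chernoff_lower q hq0 hq1 N hN t ht0 htN)
    _ = 2 * Real.exp (-(t^2) / (8*N)) := by ring

open MeasureTheory Classical in
lemma meas_mem_le {Ω : Type*} [MeasurableSpace Ω] (μ : Measure Ω)
    (X : Ω → ℕ) (p : ℕ → ℝ) (hp : ∀ k, 0 ≤ p k) (N : ℕ)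
    (hp0 : ∀ k, N + 1 ≤ k → p k = 0)
    (hlaw : ∀ k, μ {ω | X ω = k} = ENNReal.ofReal (p k))
    (S : Set ℕ) :
    μ {ω | X ω ∈ S} ≤ ENNReal.ofReal (∑ k ∈ range (N+1), if k ∈ S then p k else 0) := by
  have hU : {ω | X ω ∈ S} ⊆ ⋃ k : S, {ω | X ω = (k:ℕ)} := fun ω h =>
    Set.mem_iUnion.2 ⟨⟨X ω, h⟩, rfl⟩
  calc μ {ω | X ω ∈ S} ≤ μ (⋃ k : S, {ω | X ω = (k:ℕ)}) := measure_mono hU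
    _ ≤ ∑' k : S, μ {ω | X ω = (k:ℕ)} := measure_iUnion_le _
    _ = ∑' k : ℕ, Set.indicator S (fun k => μ {ω | X ω = k}) k := _root_.tsum_subtype S (fun k => μ {ω | X ω = k})
    _ = ∑ k ∈ range (N+1), Set.indicator S (fun k => μ {ω | X ω = k}) k := by
        refine tsum_eq_sum fun k hk => ?_
        have hk' : p k = 0 := hp0 k (by simp only [Finset.mem_range, not_lt] at hk; omega)
        simp [Set.indicator_apply, hlaw, hk']
    _ = ENNReal.ofReal (∑ k ∈ range (N+1), if k ∈ S then p k else 0) := by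
        rw [ENNReal.ofReal_sum_of_nonneg (fun k _ => by split_ifs; exacts [hp k, le_rfl])]
        refine Finset.sum_congr rfl fun k _ => ?_
        by_cases h : k ∈ S <;> simp [Set.indicator_apply, h, hlaw]

open MeasureTheory in
lemma meas_abs_gt {Ω : Type*} [MeasurableSpace Ω] (μ : Measure Ω)
    (X : Ω → ℕ) (q : ℝ) (hq0 : 0 ≤ q) (hq1 : q ≤ 1) (N : ℕ) (hN : 1 ≤ N)
    (t : ℝ) (ht0 : 0 ≤ t) (htN : t ≤ 2*N)
    (hlaw : ∀ k, μ {ω | X ω = k} = ENNReal.ofReal ((N.choose k : ℝ) * q ^ k * (1-q) ^ (N-k))) :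
    μ {ω | t < |(X ω : ℝ) - (N:ℝ)*q|} ≤ ENNReal.ofReal (2 * Real.exp (-(t^2)/(8*N))) := by
  have h1 := meas_mem_le μ X (fun k => (N.choose k : ℝ) * q ^ k * (1-q) ^ (N-k))
      (fun k => pmf_nonneg q hq0 hq1 N k) N
      (fun k hk => by simp [Nat.choose_eq_zero_of_lt (by omega : N < k)])
      hlaw {k | t < |(k:ℝ) - (N:ℝ)*q|}
  refine le_trans h1 (ENNReal.ofReal_le_ofReal
    (le_trans (le_of_eq ?_) (binom_tail q hq0 hq1 N hN t ht0 htN)))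
  exact Finset.sum_congr rfl fun k _ => by simp [Set.mem_setOf_eq]

section helpers
lemma rpow_third_le {x y : ℝ} (hx : 0 ≤ x) (hy : 0 ≤ y) (h : x ≤ y^3) :
    x ^ ((1:ℝ)/3) ≤ y := by
  have h3 : (y^3 : ℝ) ^ ((1:ℝ)/3) = y := by
    rw [← Real.rpow_natCast y 3, ← Real.rpow_mul hy]; norm_num
  calc x ^ ((1:ℝ)/3) ≤ (y^3) ^ ((1:ℝ)/3) := Real.rpow_le_rpow hx h (by norm_num)
    _ = y := h3

lemma cube_mul_rpow {c b : ℝ} (hc : 0 ≤ c) (hb : 0 ≤ b) :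
    (c^3 * b) ^ ((1:ℝ)/3) = c * b ^ ((1:ℝ)/3) := by
  rw [Real.mul_rpow (by positivity) hb]
  congr 1
  rw [← Real.rpow_natCast c 3, ← Real.rpow_mul hc]; norm_num

lemma two_thirds_third {a : ℝ} (ha : 0 < a) : a ^ ((2:ℝ)/3) * a ^ ((1:ℝ)/3) = a := by
  rw [← Real.rpow_add ha]; norm_num

lemma third_two_thirds {a : ℝ} (ha : 0 < a) : a ^ ((1:ℝ)/3) * a ^ ((2:ℝ)/3) = a := by
  rw [← Real.rpow_add ha]; norm_num
end helpers

set_option maxHeartbeats 1600000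

/-- Seeded deletion detection via outlier detection: with `q₀ ≠ q₁` in `(0,1)`, seed size
`Λ_n = ω(log n)`, threshold `τ̂_n = 2 Λ_n^{2/3} (log n)^{1/3}`, distinct matching indices
`r_j`, and independent `L_{i,j}` distributed `Binom(Λ_n, q₁)` for `i = r_j` and
`Binom(Λ_n, q₀)` otherwise, with probability tending to `1` every outlier deviates from
`Λ_n q₀` by more than `τ̂_n` and every non-outlier deviates by at most `τ̂_n`. -/
theorem stmt_14 (q₀ q₁ : ℝ) (hq₀0 : 0 < q₀) (hq₀1 : q₀ < 1) (hq₁0 : 0 < q₁) (hq₁1 : q₁ < 1)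
    (hne : q₀ ≠ q₁)
    (Ω : ℕ → Type*) [∀ n, MeasurableSpace (Ω n)]
    (μ : ∀ n, Measure (Ω n)) [∀ n, IsProbabilityMeasure (μ n)]
    (Λ : ℕ → ℕ) (hΛpos : ∀ n, 1 ≤ Λ n)
    (hΛ : Tendsto (fun n : ℕ => (Λ n : ℝ) / Real.log n) atTop atTop)
    (τ : ℕ → ℝ)
    (hτ : ∀ n, τ n = 2 * (Λ n : ℝ) ^ ((2 : ℝ) / 3) * (Real.log n) ^ ((1 : ℝ) / 3))
    (K : ℕ → ℕ) (hK : ∀ n, K n ≤ n)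
    (r : ∀ n, Fin (K n) → Fin n) (hr : ∀ n, Function.Injective (r n))
    (L : ∀ n, Fin n → Fin (K n) → Ω n → ℕ)
    (hmeas : ∀ n i j, Measurable (L n i j))
    (hindep : ∀ n,
      iIndepFun
        (fun p : Fin n × Fin (K n) => L n p.1 p.2) (μ n))
    (hlaw1 : ∀ n (j : Fin (K n)) (k : ℕ),
      μ n {ω | L n (r n j) j ω = k}
        = ENNReal.ofReal (((Λ n).choose k : ℝ) * q₁ ^ k * (1 - q₁) ^ (Λ n - k)))
    (hlaw0 : ∀ n (i : Fin n) (j : Fin (K n)), i ≠ r n j → ∀ k : ℕ,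
      μ n {ω | L n i j ω = k}
        = ENNReal.ofReal (((Λ n).choose k : ℝ) * q₀ ^ k * (1 - q₀) ^ (Λ n - k))) :
    Tendsto
      (fun n : ℕ =>
        μ n {ω | ∀ j : Fin (K n),
          τ n < |(L n (r n j) j ω : ℝ) - (Λ n : ℝ) * q₀| ∧
          ∀ i : Fin n, i ≠ r n j → |(L n i j ω : ℝ) - (Λ n : ℝ) * q₀| ≤ τ n})
      atTop (nhds 1) := by
  classical
  set δ : ℝ := |q₁ - q₀| with hδdef
  have hδ0 : 0 < δ := abs_pos.mpr (sub_ne_zero.mpr (Ne.symm hne))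
  have hδ1 : δ < 1 := by rw [hδdef, abs_sub_lt_iff]; constructor <;> linarith
  set E : ∀ n : ℕ, Set (Ω n) := fun n => {ω | ∀ j : Fin (K n),
      τ n < |(L n (r n j) j ω : ℝ) - (Λ n : ℝ) * q₀| ∧
      ∀ i : Fin n, i ≠ r n j → |(L n i j ω : ℝ) - (Λ n : ℝ) * q₀| ≤ τ n} with hE
  have hΛr : ∀ n, (0:ℝ) < (Λ n : ℝ) := fun n => by exact_mod_cast hΛpos n
  have hτ0 : ∀ n, 0 ≤ τ n := fun n => by
    rw [hτ]
    have h1 : (0:ℝ) ≤ (Λ n : ℝ) ^ ((2:ℝ)/3) := Real.rpow_nonneg (Nat.cast_nonneg _) _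
    have h2 : (0:ℝ) ≤ (Real.log n) ^ ((1:ℝ)/3) :=
      Real.rpow_nonneg (Real.log_natCast_nonneg n) _
    positivity
  -- measurability of E
  have hMR : ∀ n (i : Fin n) (j : Fin (K n)),
      Measurable fun ω => ((L n i j ω : ℕ) : ℝ) :=
    fun n i j => measurable_from_top.comp (hmeas n i j)
  have hEmeas : ∀ n, MeasurableSet (E n) := by
    intro n
    simp only [hE]
    rw [Set.setOf_forall]
    refine MeasurableSet.iInter fun j => ?_
    rw [Set.setOf_and]
    refine (measurableSet_lt measurable_const ((hMR n _ j).sub measurable_const).abs).inter ?_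
    rw [Set.setOf_forall]
    refine MeasurableSet.iInter fun i => ?_
    by_cases h : i = r n j
    · simp [h]
    · simp only [h, ne_eq, not_false_eq_true, true_implies]
      exact measurableSet_le ((hMR n i j).sub measurable_const).abs measurable_const
  -- eventual hypotheses
  set C : ℝ := 216 + 144/δ^2 + 64/δ^3 with hCdef
  have hev : ∀ᶠ n : ℕ in atTop, 2 ≤ n ∧ C * Real.log n ≤ (Λ n : ℝ) := by
    filter_upwards [eventually_ge_atTop (2:ℕ), hΛ.eventually_ge_atTop C] with n h2 hC'
    refine ⟨h2, ?_⟩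
    have hlog : 0 < Real.log n :=
      Real.log_pos (by exact_mod_cast Nat.lt_of_lt_of_le Nat.one_lt_two h2)
    rw [le_div_iff₀ hlog] at hC'
    linarith
  -- the dominating sequence
  set B : ℕ → ℝ≥0∞ := fun n => ENNReal.ofReal
      ((n:ℝ) * (2 * Real.exp (-((((Λ n:ℝ))*δ/3)^2) / (8*(Λ n:ℝ))))
        + (n:ℝ)^2 * (2 * Real.exp (-((τ n)^2) / (8*(Λ n:ℝ))))) with hB
  -- Claim A: eventual union bound
  have hbound : ∀ᶠ n in atTop, μ n (E n)ᶜ ≤ B n := by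
    filter_upwards [hev] with n hn
    obtain ⟨hn2, hCb⟩ := hn
    have hb : 0 < Real.log n :=
      Real.log_pos (by exact_mod_cast Nat.lt_of_lt_of_le Nat.one_lt_two hn2)
    have ha : (0:ℝ) < (Λ n : ℝ) := hΛr n
    rw [hCdef] at hCb
    have h216 : 216 * Real.log n ≤ (Λ n : ℝ) := by
      have h1 : 0 ≤ (144/δ^2) * Real.log n := by positivity
      have h2 : 0 ≤ (64/δ^3) * Real.log n := by positivity
      nlinarith
    have h64 : 64 * Real.log n ≤ δ^3 * (Λ n : ℝ) := by
      have h1 : (64/δ^3) * Real.log n ≤ (Λ n : ℝ) := by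
        have h2 : 0 ≤ 216 * Real.log n := by positivity
        have h3 : 0 ≤ (144/δ^2) * Real.log n := by positivity
        nlinarith
      rw [div_mul_eq_mul_div, div_le_iff₀ (by positivity)] at h1
      linarith [h1]
    -- τ n ≤ Λ n * δ / 2  and  τ n ≤ Λ n
    have hthird : 4 * (Real.log n) ^ ((1:ℝ)/3) ≤ δ * (Λ n : ℝ) ^ ((1:ℝ)/3) := by
      have e1 : ((4:ℝ)^3 * Real.log n) ^ ((1:ℝ)/3) = 4 * (Real.log n) ^ ((1:ℝ)/3) :=
        cube_mul_rpow (by norm_num) hb.le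
      have e2 : (δ^3 * (Λ n : ℝ)) ^ ((1:ℝ)/3) = δ * (Λ n : ℝ) ^ ((1:ℝ)/3) :=
        cube_mul_rpow hδ0.le ha.le
      rw [← e1, ← e2]
      exact Real.rpow_le_rpow (by positivity) (by norm_num; linarith) (by norm_num)
    have hτδ : τ n ≤ (Λ n : ℝ) * δ / 2 := by
      rw [hτ]
      have h1 := mul_le_mul_of_nonneg_left hthird
        (by positivity : (0:ℝ) ≤ (Λ n : ℝ) ^ ((2:ℝ)/3) / 2)
      have h2 := two_thirds_third ha
      nlinarith [Real.rpow_nonneg ha.le ((2:ℝ)/3), Real.rpow_nonneg hb.le ((1:ℝ)/3)]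
    have hτΛ : τ n ≤ (Λ n : ℝ) := by
      have := hτδ
      nlinarith [hτ0 n]
    -- bad sets
    set c1 : ℝ := 2 * Real.exp (-(((Λ n:ℝ)*δ/3)^2) / (8*(Λ n:ℝ))) with hc1
    set c2 : ℝ := 2 * Real.exp (-((τ n)^2) / (8*(Λ n:ℝ))) with hc2
    have hc1nn : 0 ≤ c1 := by positivity
    have hc2nn : 0 ≤ c2 := by positivity
    set A : Fin (K n) → Set (Ω n) := fun j =>
      {ω | ¬ τ n < |((L n (r n j) j ω : ℕ):ℝ) - (Λ n:ℝ)*q₀|} with hA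
    set Bs : Fin n × Fin (K n) → Set (Ω n) := fun p =>
      {ω | p.1 ≠ r n p.2 ∧ τ n < |((L n p.1 p.2 ω : ℕ):ℝ) - (Λ n:ℝ)*q₀|} with hBs
    have hsub : (E n)ᶜ ⊆ (⋃ j, A j) ∪ ⋃ p, Bs p := by
      intro ω hω
      simp only [hE, Set.mem_compl_iff, Set.mem_setOf_eq, not_forall] at hω
      obtain ⟨j, hj⟩ := hω
      rcases not_and_or.mp hj with h | h
      · exact Or.inl (Set.mem_iUnion.2 ⟨j, h⟩)
      · push_neg at h
        obtain ⟨i, hi, hlt⟩ := h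
        exact Or.inr (Set.mem_iUnion.2 ⟨(i, j), hi, hlt⟩)
    have hAle : ∀ j, μ n (A j) ≤ ENNReal.ofReal c1 := by
      intro j
      have hsubA : A j ⊆ {ω | (Λ n:ℝ)*δ/3 < |((L n (r n j) j ω : ℕ):ℝ) - (Λ n:ℝ)*q₁|} := by
        intro ω h
        simp only [hA, Set.mem_setOf_eq, not_lt] at h
        simp only [Set.mem_setOf_eq]
        have tri : |(Λ n:ℝ)*q₁ - (Λ n:ℝ)*q₀|
            ≤ |(Λ n:ℝ)*q₁ - ((L n (r n j) j ω:ℕ):ℝ)|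
              + |((L n (r n j) j ω:ℕ):ℝ) - (Λ n:ℝ)*q₀| := abs_sub_le _ _ _
        have habs : |(Λ n:ℝ)*q₁ - (Λ n:ℝ)*q₀| = (Λ n:ℝ)*δ := by
          rw [← mul_sub, abs_mul, Nat.abs_cast, hδdef]
        have hδΛ : 0 < (Λ n:ℝ)*δ := by positivity
        rw [habs, abs_sub_comm ((Λ n:ℝ)*q₁)] at tri
        linarith
      refine le_trans (measure_mono hsubA) ?_
      rw [hc1]
      exact meas_abs_gt (μ n) (L n (r n j) j) q₁ hq₁0.le hq₁1.le (Λ n) (hΛpos n)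
        ((Λ n:ℝ)*δ/3) (by positivity) (by nlinarith) (hlaw1 n j)
    have hBle : ∀ p : Fin n × Fin (K n), μ n (Bs p) ≤ ENNReal.ofReal c2 := by
      intro p
      by_cases hp : p.1 = r n p.2
      · have hempty : Bs p = ∅ := by
          ext ω; simp [hBs, hp]
        rw [hempty]; simp
      · have hsubB : Bs p ⊆ {ω | τ n < |((L n p.1 p.2 ω:ℕ):ℝ) - (Λ n:ℝ)*q₀|} :=
          fun ω h => h.2
        refine le_trans (measure_mono hsubB) ?_
        rw [hc2]
        exact meas_abs_gt (μ n) (L n p.1 p.2) q₀ hq₀0.le hq₀1.le (Λ n) (hΛpos n)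
          (τ n) (hτ0 n) (by linarith) (hlaw0 n p.1 p.2 hp)
    calc μ n (E n)ᶜ ≤ μ n ((⋃ j, A j) ∪ ⋃ p, Bs p) := measure_mono hsub
      _ ≤ μ n (⋃ j, A j) + μ n (⋃ p, Bs p) := measure_union_le _ _
      _ ≤ (∑' j, μ n (A j)) + ∑' p, μ n (Bs p) :=
          add_le_add (measure_iUnion_le _) (measure_iUnion_le _)
      _ ≤ (∑' _j : Fin (K n), ENNReal.ofReal c1)
            + ∑' _p : Fin n × Fin (K n), ENNReal.ofReal c2 :=
          add_le_add (ENNReal.tsum_le_tsum hAle) (ENNReal.tsum_le_tsum hBle)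
      _ = (K n : ℝ≥0∞) * ENNReal.ofReal c1
            + ((n : ℝ≥0∞) * (K n : ℝ≥0∞)) * ENNReal.ofReal c2 := by
          rw [tsum_fintype, tsum_fintype, Finset.sum_const, Finset.sum_const,
            Finset.card_univ, Finset.card_univ, Fintype.card_fin, Fintype.card_prod,
            Fintype.card_fin, Fintype.card_fin, nsmul_eq_mul, nsmul_eq_mul, Nat.cast_mul]
      _ ≤ (n : ℝ≥0∞) * ENNReal.ofReal c1
            + ((n : ℝ≥0∞) * (n : ℝ≥0∞)) * ENNReal.ofReal c2 := by
          gcongr <;> exact_mod_cast hK n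
      _ = B n := by
          simp only [hB]
          rw [ENNReal.ofReal_add (by positivity) (by positivity)]
          congr 1
          · rw [ENNReal.ofReal_mul (by positivity : (0:ℝ) ≤ (n:ℝ)),
              ENNReal.ofReal_natCast]
          · rw [ENNReal.ofReal_mul (by positivity : (0:ℝ) ≤ (n:ℝ)^2),
              ENNReal.ofReal_pow (by positivity), ENNReal.ofReal_natCast, sq]
  -- Claim B : the bound tends to 0
  have hBtend : Tendsto B atTop (nhds 0) := by
    have hreal : Tendsto (fun n : ℕ =>
        (n:ℝ) * (2 * Real.exp (-((((Λ n:ℝ))*δ/3)^2) / (8*(Λ n:ℝ))))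
          + (n:ℝ)^2 * (2 * Real.exp (-((τ n)^2) / (8*(Λ n:ℝ))))) atTop (nhds 0) := by
      have ht1 : Tendsto (fun n : ℕ =>
          (n:ℝ) * (2 * Real.exp (-((((Λ n:ℝ))*δ/3)^2) / (8*(Λ n:ℝ))))) atTop (nhds 0) := by
        refine squeeze_zero' (Eventually.of_forall fun n => by positivity) ?_
          (tendsto_const_div_atTop_nhds_zero_nat 2)
        filter_upwards [hev] with n hn
        obtain ⟨hn2, hCb⟩ := hn
        rw [hCdef] at hCb
        have hb : 0 < Real.log n :=
          Real.log_pos (by exact_mod_cast Nat.lt_of_lt_of_le Nat.one_lt_two hn2)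
        have ha : (0:ℝ) < (Λ n : ℝ) := hΛr n
        have hn0 : (0:ℝ) < (n:ℝ) := by positivity
        have h144 : 144 * Real.log n ≤ δ^2 * (Λ n : ℝ) := by
          have h1 : (144/δ^2) * Real.log n ≤ (Λ n : ℝ) := by
            have h2 : 0 ≤ 216 * Real.log n := by positivity
            have h3 : 0 ≤ (64/δ^3) * Real.log n := by positivity
            nlinarith
          rw [div_mul_eq_mul_div, div_le_iff₀ (by positivity)] at h1
          linarith
        have hexp : Real.exp (-((((Λ n:ℝ))*δ/3)^2) / (8*(Λ n:ℝ)))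
            ≤ Real.exp (-(2*Real.log n)) := by
          apply Real.exp_le_exp.mpr
          rw [neg_div]
          have he : (((Λ n:ℝ))*δ/3)^2 / (8*(Λ n:ℝ)) = (Λ n:ℝ)*δ^2/72 := by
            field_simp; ring
          rw [he]
          nlinarith
        have hexp2 : Real.exp (-(2*Real.log n)) = ((n:ℝ)^2)⁻¹ := by
          rw [show (2:ℝ)*Real.log n = Real.log ((n:ℝ)^2) by rw [Real.log_pow]; norm_num,
            Real.exp_neg, Real.exp_log (by positivity)]
        calc (n:ℝ) * (2 * Real.exp (-((((Λ n:ℝ))*δ/3)^2) / (8*(Λ n:ℝ))))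
            ≤ (n:ℝ) * (2 * ((n:ℝ)^2)⁻¹) := by
              rw [← hexp2]
              exact mul_le_mul_of_nonneg_left
                (mul_le_mul_of_nonneg_left hexp (by norm_num)) hn0.le
          _ = 2/(n:ℝ) := by field_simp
      have ht2 : Tendsto (fun n : ℕ =>
          (n:ℝ)^2 * (2 * Real.exp (-((τ n)^2) / (8*(Λ n:ℝ))))) atTop (nhds 0) := by
        refine squeeze_zero' (Eventually.of_forall fun n => by positivity) ?_
          (tendsto_const_div_atTop_nhds_zero_nat 2)
        filter_upwards [hev] with n hn
        obtain ⟨hn2, hCb⟩ := hn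
        rw [hCdef] at hCb
        have hb : 0 < Real.log n :=
          Real.log_pos (by exact_mod_cast Nat.lt_of_lt_of_le Nat.one_lt_two hn2)
        have ha : (0:ℝ) < (Λ n : ℝ) := hΛr n
        have hn0 : (0:ℝ) < (n:ℝ) := by positivity
        have h216 : 216 * Real.log n ≤ (Λ n : ℝ) := by
          have h1 : 0 ≤ (144/δ^2) * Real.log n := by positivity
          have h2 : 0 ≤ (64/δ^3) * Real.log n := by positivity
          nlinarith
        -- (τ n)^2/(8Λ) ≥ 3 log n
        have hsix : 6 * (Real.log n) ^ ((1:ℝ)/3) ≤ (Λ n : ℝ) ^ ((1:ℝ)/3) := by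
          have e1 : ((6:ℝ)^3 * Real.log n) ^ ((1:ℝ)/3) = 6 * (Real.log n) ^ ((1:ℝ)/3) :=
            cube_mul_rpow (by norm_num) hb.le
          rw [← e1]
          exact Real.rpow_le_rpow (by positivity) (by norm_num; linarith) (by norm_num)
        have hτsq : 24 * (Λ n:ℝ) * Real.log n ≤ (τ n)^2 := by
          rw [hτ]
          have e2 : (2 * (Λ n:ℝ) ^ ((2:ℝ)/3) * (Real.log n) ^ ((1:ℝ)/3))^2
              = 4 * ((Λ n:ℝ) * (Λ n:ℝ) ^ ((1:ℝ)/3)) * (Real.log n) ^ ((2:ℝ)/3) := by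
            have e3 : ((Λ n:ℝ) ^ ((2:ℝ)/3))^2 = (Λ n:ℝ) * (Λ n:ℝ) ^ ((1:ℝ)/3) := by
              rw [← Real.rpow_natCast ((Λ n:ℝ) ^ ((2:ℝ)/3)) 2, ← Real.rpow_mul ha.le]
              rw [show ((2:ℝ)/3) * ((2:ℕ):ℝ) = 1 + (1:ℝ)/3 by norm_num,
                Real.rpow_add ha, Real.rpow_one]
            have e4 : ((Real.log n) ^ ((1:ℝ)/3))^2 = (Real.log n) ^ ((2:ℝ)/3) := by
              rw [← Real.rpow_natCast ((Real.log n) ^ ((1:ℝ)/3)) 2, ← Real.rpow_mul hb.le]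
              norm_num
            rw [mul_pow, mul_pow, e3, e4]; ring
          rw [e2]
          have e5 := third_two_thirds hb
          have h7 : 6 * Real.log n ≤ (Λ n:ℝ) ^ ((1:ℝ)/3) * (Real.log n) ^ ((2:ℝ)/3) := by
            nlinarith [mul_le_mul_of_nonneg_right hsix (Real.rpow_nonneg hb.le ((2:ℝ)/3)), e5]
          have h8 := mul_le_mul_of_nonneg_left h7 (by positivity : (0:ℝ) ≤ 4*(Λ n:ℝ))
          nlinarith [h8]
        have hexp : Real.exp (-((τ n)^2) / (8*(Λ n:ℝ))) ≤ Real.exp (-(3*Real.log n)) := by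
          apply Real.exp_le_exp.mpr
          rw [neg_div]
          have h7 : 3*Real.log n ≤ (τ n)^2 / (8*(Λ n:ℝ)) := by
            rw [le_div_iff₀ (by positivity)]
            nlinarith
          linarith
        have hexp2 : Real.exp (-(3*Real.log n)) = ((n:ℝ)^3)⁻¹ := by
          rw [show (3:ℝ)*Real.log n = Real.log ((n:ℝ)^3) by rw [Real.log_pow]; norm_num,
            Real.exp_neg, Real.exp_log (by positivity)]
        calc (n:ℝ)^2 * (2 * Real.exp (-((τ n)^2) / (8*(Λ n:ℝ))))
            ≤ (n:ℝ)^2 * (2 * ((n:ℝ)^3)⁻¹) := by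
              rw [← hexp2]
              exact mul_le_mul_of_nonneg_left
                (mul_le_mul_of_nonneg_left hexp (by norm_num)) (by positivity)
          _ = 2/(n:ℝ) := by field_simp
      simpa using ht1.add ht2
    have := ENNReal.tendsto_ofReal hreal
    simpa [hB] using this
  -- squeeze in ℝ≥0∞
  have hcompl : Tendsto (fun n => μ n (E n)ᶜ) atTop (nhds 0) := by
    refine tendsto_of_tendsto_of_tendsto_of_le_of_le' tendsto_const_nhds hBtend
      (Eventually.of_forall fun n => zero_le) hbound
  have hfinal : Tendsto (fun n => 1 - μ n (E n)ᶜ) atTop (nhds 1) := by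
    have h := ENNReal.Tendsto.sub
      (tendsto_const_nhds : Tendsto (fun _ : ℕ => (1:ℝ≥0∞)) atTop (nhds 1))
      hcompl (Or.inl ENNReal.one_ne_top)
    simpa using h
  refine hfinal.congr fun n => ?_
  rw [measure_compl (hEmeas n) (measure_ne_top _ _), measure_univ,
    ENNReal.sub_sub_cancel ENNReal.one_ne_top prob_le_one]
end
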